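/- Let f : ℝⁿ × ℝᵐ → ℝⁿ, φ : ℝⁿ × ℝᵐ → ℝᵏ, and L : ℝⁿ × ℝᵐ → ℝ be continuously differentiable, and let t_f > 0. Let (q,u,p,λ) : [0,t_f] → ℝⁿ × ℝᵐ × ℝⁿ × ℝᵏ be a continuously differentiable solution of the augmented adjoint DAE system: q̇ = f(q,u), ṗ = −D_qf(q,u)ᵀ p − D_qφ(q,u)ᵀ λ − ∇_qL(q,u), 0 = φ(q,u), 0 = D_uf(q,u)ᵀ p + D_uφ(q,u)ᵀ λ + ∇_uL(q,u), satisfying the terminal condition p(t_f) = 0, and let (δq, δu) : [0,t_f] → ℝⁿ × ℝᵐ be a continuously differentiable solution of the variational equations δq̇ = D_qf(q,u) δq + D_uf(q,u) δu and 0 = D_qφ(q,u) δq + D_uφ(q,u) δu along (q,u). Then ⟨p(0), δq(0)⟩ = ∫₀^{t_f} ( ⟨∇_qL(q(t),u(t)), δq(t)⟩ + ⟨∇_uL(q(t),u(t)), δu(t)⟩ ) dt, i.e., p(0) is the adjoint sensitivity of the running cost ∫₀^{t_f} L(q,u) dt with respect to a perturbation δq(0) of the initial condition. -/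

import Mathlib

open scoped RealInnerProductSpace

noncomputable section

abbrev Euc (n : ℕ) : Type := EuclideanSpace ℝ (Fin n)

/-- Partial Jacobian `D_qF(q,u)` with respect to the first argument. -/
noncomputable def Dq {n m k : ℕ} (F : Euc n × Euc m → Euc k) (q : Euc n) (u : Euc m) :
    Euc n →L[ℝ] Euc k :=
  fderiv ℝ (fun q' => F (q', u)) q

/-- Partial Jacobian `D_uF(q,u)` with respect to the second argument. -/
noncomputable def Du {n m k : ℕ} (F : Euc n × Euc m → Euc k) (q : Euc n) (u : Euc m) :
    Euc m →L[ℝ] Euc k :=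
  fderiv ℝ (fun u' => F (q, u')) u

/-- `D_qF(q,u)ᵀ`, the transpose (adjoint) of the partial Jacobian in `q`. -/
noncomputable def DqT {n m k : ℕ} (F : Euc n × Euc m → Euc k) (q : Euc n) (u : Euc m) :
    Euc k →L[ℝ] Euc n :=
  ContinuousLinearMap.adjoint (Dq F q u)

/-- `D_uF(q,u)ᵀ`, the transpose (adjoint) of the partial Jacobian in `u`. -/
noncomputable def DuT {n m k : ℕ} (F : Euc n × Euc m → Euc k) (q : Euc n) (u : Euc m) :
    Euc k →L[ℝ] Euc m :=
  ContinuousLinearMap.adjoint (Du F q u)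

/-- Partial gradient `∇_qL(q,u)`. -/
noncomputable def gradQ {n m : ℕ} (L : Euc n × Euc m → ℝ) (q : Euc n) (u : Euc m) : Euc n :=
  gradient (fun q' => L (q', u)) q

/-- Partial gradient `∇_uL(q,u)`. -/
noncomputable def gradU {n m : ℕ} (L : Euc n × Euc m → ℝ) (q : Euc n) (u : Euc m) : Euc m :=
  gradient (fun u' => L (q, u')) u

/-- adjoint sensitivity of a running cost. Along a solution of the
augmented adjoint DAE system with terminal condition `p(t_f) = 0` and a solution of
the variational equations, `⟨p(0), δq(0)⟩ = ∫₀^{t_f} (⟨∇_qL, δq⟩ + ⟨∇_uL, δu⟩) dt`. -/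
theorem adjoint_sensitivity_running_cost {n m k : ℕ}
    (f : Euc n × Euc m → Euc n) (φ : Euc n × Euc m → Euc k) (L : Euc n × Euc m → ℝ)
    (hf : ContDiff ℝ 1 f) (hφ : ContDiff ℝ 1 φ) (hL : ContDiff ℝ 1 L)
    (tf : ℝ) (htf : 0 < tf)
    (q : ℝ → Euc n) (u : ℝ → Euc m) (p : ℝ → Euc n) (lam : ℝ → Euc k)
    (δq : ℝ → Euc n) (δu : ℝ → Euc m)
    (hq : ContDiff ℝ 1 q) (hu : ContDiff ℝ 1 u) (hp : ContDiff ℝ 1 p)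
    (hlam : ContDiff ℝ 1 lam) (hδq : ContDiff ℝ 1 δq) (hδu : ContDiff ℝ 1 δu)
    (hqode : ∀ t ∈ Set.Icc (0 : ℝ) tf, HasDerivAt q (f (q t, u t)) t)
    (hpode : ∀ t ∈ Set.Icc (0 : ℝ) tf,
      HasDerivAt p (-(DqT f (q t) (u t) (p t)) - DqT φ (q t) (u t) (lam t)
        - gradQ L (q t) (u t)) t)
    (hconstr : ∀ t ∈ Set.Icc (0 : ℝ) tf, φ (q t, u t) = 0)
    (hadj : ∀ t ∈ Set.Icc (0 : ℝ) tf,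
      DuT f (q t) (u t) (p t) + DuT φ (q t) (u t) (lam t) + gradU L (q t) (u t) = 0)
    (hδqode : ∀ t ∈ Set.Icc (0 : ℝ) tf,
      HasDerivAt δq (Dq f (q t) (u t) (δq t) + Du f (q t) (u t) (δu t)) t)
    (hδconstr : ∀ t ∈ Set.Icc (0 : ℝ) tf,
      Dq φ (q t) (u t) (δq t) + Du φ (q t) (u t) (δu t) = 0)
    (hterm : p tf = 0) :
    ⟪p 0, δq 0⟫ =
      ∫ t in (0 : ℝ)..tf,
        (⟪gradQ L (q t) (u t), δq t⟫ + ⟪gradU L (q t) (u t), δu t⟫) := by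
  -- the integrand
  set E : ℝ → ℝ := fun t => ⟪gradQ L (q t) (u t), δq t⟫ + ⟪gradU L (q t) (u t), δu t⟫ with hE
  -- rewrite integrand via fderiv of L
  have hEeq : ∀ t, E t = fderiv ℝ L (q t, u t) (δq t, δu t) := by
    intro t
    have hd : DifferentiableAt ℝ L (q t, u t) := (hL.differentiable one_ne_zero) _
    have h1 : fderiv ℝ (fun q' => L (q', u t)) (q t)
        = (fderiv ℝ L (q t, u t)).comp (ContinuousLinearMap.inl ℝ (Euc n) (Euc m)) :=
      (hd.hasFDerivAt.comp (q t) (hasFDerivAt_prodMk_left (q t) (u t))).fderiv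
    have h2 : fderiv ℝ (fun u' => L (q t, u')) (u t)
        = (fderiv ℝ L (q t, u t)).comp (ContinuousLinearMap.inr ℝ (Euc n) (Euc m)) :=
      (hd.hasFDerivAt.comp (u t) (hasFDerivAt_prodMk_right (q t) (u t))).fderiv
    have g1 : ⟪gradQ L (q t) (u t), δq t⟫ = fderiv ℝ L (q t, u t) (δq t, 0) := by
      rw [gradQ, gradient, InnerProductSpace.toDual_symm_apply, h1]; rfl
    have g2 : ⟪gradU L (q t) (u t), δu t⟫ = fderiv ℝ L (q t, u t) (0, δu t) := by
      rw [gradU, gradient, InnerProductSpace.toDual_symm_apply, h2]; rfl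
    have : ((δq t, δu t) : Euc n × Euc m) = (δq t, (0 : Euc m)) + ((0 : Euc n), δu t) := by
      simp
    rw [hE]; simp only [g1, g2, this, map_add]
  have hEcont : Continuous E := by
    have : Continuous (fun t => fderiv ℝ L (q t, u t) (δq t, δu t)) := by
      exact ((hL.continuous_fderiv one_ne_zero).comp
        (hq.continuous.prodMk hu.continuous)).clm_apply
        (hδq.continuous.prodMk hδu.continuous)
    exact (funext hEeq : E = _) ▸ this
  -- derivative of ⟪p t, δq t⟫
  have hderiv : ∀ t ∈ Set.uIcc (0 : ℝ) tf,
      HasDerivAt (fun t => (⟪p t, δq t⟫ : ℝ)) (-(E t)) t := by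
    intro t ht
    rw [Set.uIcc_of_le htf.le] at ht
    have h := HasDerivAt.inner ℝ (hpode t ht) (hδqode t ht)
    have hadj' : (⟪DuT f (q t) (u t) (p t) + DuT φ (q t) (u t) (lam t)
        + gradU L (q t) (u t), δu t⟫ : ℝ) = 0 := by rw [hadj t ht, inner_zero_left]
    have hδc' : (⟪lam t, Dq φ (q t) (u t) (δq t) + Du φ (q t) (u t) (δu t)⟫ : ℝ) = 0 := by
      rw [hδconstr t ht, inner_zero_right]
    simp only [inner_add_left, inner_add_right, inner_sub_left, inner_neg_left,
      DqT, DuT, ContinuousLinearMap.adjoint_inner_left] at h hadj' hδc'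
    refine h.congr_deriv ?_
    simp only [hE, inner_add_left]
    linarith
  have hint : IntervalIntegrable (fun t => -(E t)) MeasureTheory.volume 0 tf :=
    (hEcont.neg).intervalIntegrable 0 tf
  have := intervalIntegral.integral_eq_sub_of_hasDerivAt hderiv hint
  rw [hterm, inner_zero_left] at this
  rw [intervalIntegral.integral_neg] at this
  have : (⟪p 0, δq 0⟫ : ℝ) = ∫ t in (0:ℝ)..tf, E t := by linarith
  simpa [hE] using this


end
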